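/- Let (A, +) be a nontrivial finite abelian group, identify right-infinite words g = g₀g₁g₂… ∈ A^ω with formal power series F_g(t) = Σ g_i t^i in A[[t]] (as a module over ℤ[[t]]). Let 𝒜 = M(B_k(A), χ_k(A)) and q ∈ A^k a state, F_q(t) its polynomial of degree < k. Then F_{𝒜_q(g)}(t) = (1 − t^k) F_g(t) − F_q(t) for all g ∈ A^ω. -/

import Mathlib

/-- The action of a DFA transition function on words. -/
def dfaRun {Q A : Type*} (δ : Q → A → Q) (q : Q) (u : List A) : Q := u.foldl δ q

/-- The action of a state of a Mealy automaton on right-infinite words. -/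
def mealyOmega {Q A : Type*} (δ : Q → A → Q) (lam : Q → A → A) (q : Q) (g : ℕ → A) :
    ℕ → A :=
  fun n => lam (dfaRun δ q ((List.range n).map g)) (g n)

/-- The transition function of the De Bruijn automaton of order `k`. -/
def dbStep (A : Type*) (k : ℕ) (q : Fin k → A) (x : A) : Fin k → A :=
  fun i => if h : (i : ℕ) + 1 < k then q ⟨(i : ℕ) + 1, h⟩ else x

lemma dbRun_eq {A : Type*} (k : ℕ) (d : A) (w : List A) (q : Fin k → A) (i : Fin k) :
    dfaRun (dbStep A k) q w i =
      if h : (i : ℕ) + w.length < k then q ⟨(i : ℕ) + w.length, h⟩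
      else w.getD ((i : ℕ) + w.length - k) d := by
  induction w using List.reverseRecOn generalizing i with
  | nil =>
    simp [dfaRun, Fin.eta, i.isLt]
  | append_singleton w x ih =>
    have hi := i.isLt
    have : dfaRun (dbStep A k) q (w ++ [x]) = dbStep A k (dfaRun (dbStep A k) q w) x := by
      simp [dfaRun]
    rw [this]
    have hdb : ∀ p : Fin k → A, dbStep A k p x i =
        if h : (i : ℕ) + 1 < k then p ⟨(i : ℕ) + 1, h⟩ else x := fun p => rfl
    rw [hdb]
    by_cases h1 : (i : ℕ) + 1 < k
    · rw [dif_pos h1, ih ⟨(i : ℕ) + 1, h1⟩]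
      simp only [List.length_append, List.length_singleton]
      by_cases h2 : (i : ℕ) + 1 + w.length < k
      · rw [dif_pos h2, dif_pos (by omega)]
        exact congrArg q (Fin.ext (by simp only [Fin.val_mk]; omega))
      · rw [dif_neg h2, dif_neg (by omega)]
        have h3 : (i : ℕ) + 1 + w.length - k = (i : ℕ) + (w.length + 1) - k := by omega
        have h4 : (i : ℕ) + 1 + w.length - k < w.length := by omega
        rw [List.getD_eq_getElem _ _ h4, ← h3,
          List.getD_eq_getElem _ _ (show _ < (w ++ [x]).length by simp; omega)]
        exact (List.getElem_append_left h4).symm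
    · rw [dif_neg h1]
      simp only [List.length_append, List.length_singleton]
      rw [dif_neg (by omega)]
      have h3 : (i : ℕ) + (w.length + 1) - k = w.length := by omega
      rw [h3, List.getD_eq_getElem _ _ (by simp), List.getElem_concat_length rfl]

/-- Identifying `A^ω` with `A[[t]]` coefficientwise, the action of a state `q` of
`M(B_k(A), χ_k(A))` on power series is `F ↦ (1 - t^k)·F - F_q`: the `n`-th coefficient of
`𝒜_q(g)` is `g n - g (n - k)` (the latter present only when `n ≥ k`) minus the `n`-th
coefficient of the polynomial `F_q` (present only when `n < k`). -/
theorem stmt17 {A : Type*} [AddCommGroup A] [Fintype A] [Nontrivial A]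
    (k : ℕ) [NeZero k] (q : Fin k → A) (g : ℕ → A) (n : ℕ) :
    mealyOmega (dbStep A k) (fun p x => x - p 0) q g n =
      (g n - if k ≤ n then g (n - k) else 0) - (if h : n < k then q ⟨n, h⟩ else 0) := by
  have hk : 0 < k := Nat.pos_of_ne_zero (NeZero.ne k)
  simp only [mealyOmega]
  rw [dbRun_eq k 0]
  simp only [List.length_map, List.length_range, Fin.val_zero, Nat.zero_add]
  by_cases h : n < k
  · rw [dif_pos h, dif_pos h, if_neg (by omega)]
    abel
  · rw [dif_neg h, dif_neg h, if_pos (by omega)]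
    have h4 : n - k < n := by omega
    rw [List.getD_eq_getElem _ _ (by simpa using h4)]
    simp [h4]
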